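/- The extended occupancy mass function satisfies the recursion Occ(k|n+1, m, θ) = θ·((m−k+1)/m)·Occ(k−1|n, m, θ) + (1 − θ·(m−k)/m)·Occ(k|n, m, θ). -/

import Mathlib

open Finset

/-- Extended occupancy mass function, with the convention `Occ (-1) n m θ = 0`. -/
noncomputable def Occ (k : ℤ) (n m : ℕ) (θ : ℝ) : ℝ :=
  if k < 0 then 0 else
    (Nat.choose m k.toNat : ℝ) *
      ∑ i ∈ Finset.range (k.toNat + 1),
        (Nat.choose k.toNat i : ℝ) * (-1) ^ (k.toNat - i) * (1 - θ * ((m : ℝ) - i) / m) ^ n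

theorem occupancy_recursion (n m k : ℕ) (hm : 0 < m) (hk : k ≤ m) (θ : ℝ)
    (hθ0 : 0 < θ) (hθ1 : θ ≤ 1) :
    Occ (k : ℤ) (n + 1) m θ =
      θ * (((m : ℝ) - k + 1) / m) * Occ ((k : ℤ) - 1) n m θ +
        (1 - θ * ((m : ℝ) - k) / m) * Occ (k : ℤ) n m θ := by
  have hm0 : (m : ℝ) ≠ 0 := Nat.cast_ne_zero.mpr hm.ne'
  cases k with
  | zero =>
      simp only [Occ, Nat.cast_zero, Int.toNat_zero]
      norm_num
      field_simp
      ring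
  | succ j =>
      have hj : j ≤ m := le_of_lt (Nat.lt_of_succ_le hk)
      have h1 : ¬ (((j + 1 : ℕ) : ℤ) < 0) := by omega
      have h2 : ¬ (((j + 1 : ℕ) : ℤ) - 1 < 0) := by omega
      have ht1 : (((j + 1 : ℕ) : ℤ)).toNat = j + 1 := by omega
      have ht2 : ((((j + 1 : ℕ) : ℤ)) - 1).toNat = j := by omega
      simp only [Occ, if_neg h1, if_neg h2, ht1, ht2]
      set a : ℕ → ℝ := fun i => 1 - θ * ((m : ℝ) - i) / m with ha
      -- step 1: split a i ^ (n+1)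
      have key : ∀ i ∈ Finset.range (j + 1 + 1),
          (Nat.choose (j+1) i : ℝ) * (-1) ^ (j + 1 - i) * a i ^ (n + 1)
            = a (j+1) * ((Nat.choose (j+1) i : ℝ) * (-1) ^ (j + 1 - i) * a i ^ n)
              - (θ / m) * ((Nat.choose (j+1) i : ℝ) * (-1) ^ (j + 1 - i) *
                  (((j+1 : ℕ) : ℝ) - i) * a i ^ n) := by
        intro i _
        have : a i = a (j+1) - θ * (((j+1 : ℕ) : ℝ) - i) / m := by
          simp only [ha]
          field_simp
          ring
        rw [pow_succ, this]
        ring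
      rw [Finset.sum_congr rfl key, Finset.sum_sub_distrib, ← Finset.mul_sum, ← Finset.mul_sum]
      -- step 2: the second sum
      have hT : ∑ i ∈ Finset.range (j + 1 + 1),
          (Nat.choose (j+1) i : ℝ) * (-1) ^ (j + 1 - i) * (((j+1 : ℕ) : ℝ) - i) * a i ^ n
            = -(((j+1) : ℕ) : ℝ) *
              ∑ i ∈ Finset.range (j + 1),
                (Nat.choose j i : ℝ) * (-1) ^ (j - i) * a i ^ n := by
        rw [Finset.sum_range_succ]
        have hlast : (((j+1 : ℕ) : ℝ) - ((j+1 : ℕ) : ℝ)) = 0 := by ring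
        rw [Finset.mul_sum]
        rw [show ((Nat.choose (j+1) (j+1) : ℝ) * (-1) ^ (j + 1 - (j+1)) *
            (((j+1 : ℕ) : ℝ) - ((j+1 : ℕ) : ℝ)) * a (j+1) ^ n) = 0 by rw [hlast]; ring,
          add_zero]
        refine Finset.sum_congr rfl ?_
        intro i hi
        have hij : i ≤ j := Nat.lt_succ_iff.mp (Finset.mem_range.mp hi)
        have hC : (Nat.choose (j+1) i) * (j + 1 - i) = (j+1) * Nat.choose j i := by
          rw [← Nat.choose_succ_right_eq, ← Nat.add_one_mul_choose_eq]
        have hsub : j + 1 - i = (j - i) + 1 := by omega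
        have hcast : (((j+1 : ℕ) : ℝ) - (i : ℝ)) = ((j + 1 - i : ℕ) : ℝ) := by
          rw [Nat.cast_sub (by omega : i ≤ j + 1)]
        rw [hsub, hcast, pow_succ]
        have : (Nat.choose (j+1) i : ℝ) * ((j + 1 - i : ℕ) : ℝ)
            = ((j+1 : ℕ) : ℝ) * (Nat.choose j i : ℝ) := by
          exact_mod_cast congrArg (Nat.cast : ℕ → ℝ) hC
        linear_combination (-(-1 : ℝ) ^ (j - i) * a i ^ n) * this
      rw [hT]
      -- step 3: combine using the choose identity
      have hCm : (Nat.choose m (j+1) : ℝ) * ((j+1 : ℕ) : ℝ)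
          = (Nat.choose m j : ℝ) * ((m : ℝ) - (j : ℝ)) := by
        have := Nat.choose_succ_right_eq m j
        have hms : ((m - j : ℕ) : ℝ) = (m : ℝ) - (j : ℝ) := by
          push_cast [Nat.cast_sub hj]; ring
        rw [← hms]
        exact_mod_cast this
      have hck : ((m : ℝ) - ((j+1 : ℕ) : ℝ) + 1) = (m : ℝ) - (j : ℝ) := by
        push_cast; ring
      rw [hck]
      linear_combination (θ / (m : ℝ) *
        ∑ i ∈ Finset.range (j + 1), (Nat.choose j i : ℝ) * (-1) ^ (j - i) * a i ^ n) * hCm
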